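/- Let x_1,…,x_m ∈ ℝ^d satisfy max_i ‖x_i‖ ≤ 1 and be separable with margin γ ∈ (0,1], let ℓ(z) = log(1 + exp(−z)) be the logistic loss, and consider gradient descent iterates w_1 = 0, w_{t+1} = w_t − ∇L̂(w_t) (step size 1). Then for every T ≥ 1, L̂(w_T) ≤ 1/T + log²(T)/(2γ²T). -/

import Mathlib

open scoped RealInnerProductSpace

namespace Stmt8
open Real




noncomputable def dd (z : ℝ) : ℝ := (1 + Real.exp z)⁻¹
noncomputable def ll (z : ℝ) : ℝ := Real.log (1 + Real.exp (-z))

lemma one_add_exp_pos (z : ℝ) : 0 < 1 + Real.exp z := by positivity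

lemma dd_pos (z : ℝ) : 0 < dd z := by unfold dd; positivity

lemma dd_le_one (z : ℝ) : dd z ≤ 1 := by
  unfold dd
  rw [inv_le_one_iff₀]
  right; nlinarith [Real.exp_pos z]

lemma one_add_exp_pos' (z : ℝ) : (0:ℝ) < 1 + Real.exp (-z) := by positivity

lemma dd_antitone {a b : ℝ} (h : a ≤ b) : dd b ≤ dd a := by
  unfold dd
  apply inv_anti₀ (one_add_exp_pos a)
  have := Real.exp_le_exp.2 h
  linarith

lemma hasDerivAt_ll (z : ℝ) : HasDerivAt ll (-dd z) z := by
  have h1 : HasDerivAt (fun z : ℝ => 1 + Real.exp (-z)) (-Real.exp (-z)) z := by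
    have h0 : HasDerivAt (fun z : ℝ => -z) (-1) z := (hasDerivAt_id z).neg
    have := (Real.hasDerivAt_exp (-z)).comp z h0
    simpa using this.const_add 1
  have h2 := h1.log (ne_of_gt (one_add_exp_pos' z))
  refine h2.congr_deriv ?_
  unfold dd
  rw [Real.exp_neg]
  have he := Real.exp_pos z
  field_simp
  ring

lemma hasDerivAt_dd (z : ℝ) : HasDerivAt dd (-(Real.exp z / (1 + Real.exp z)^2)) z := by
  have h1 : HasDerivAt (fun z : ℝ => 1 + Real.exp z) (Real.exp z) z := by
    simpa using (Real.hasDerivAt_exp z).const_add 1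
  have := h1.inv (ne_of_gt (one_add_exp_pos z))
  have h2 : -(Real.exp z/(1+Real.exp z)^2) = -Real.exp z/(1+Real.exp z)^2 := (neg_div _ _).symm
  rw [h2]; exact this

lemma dd_lip {a b : ℝ} (h : a ≤ b) : dd a - dd b ≤ (b - a) / 4 := by
  have hmono : Monotone (fun z => dd z + z / 4) := by
    apply monotone_of_deriv_nonneg
    · intro z
      exact ((hasDerivAt_dd z).add ((hasDerivAt_id' z).div_const 4)).differentiableAt
    · intro z
      have hD : HasDerivAt (fun z : ℝ => dd z + z / 4) (-(Real.exp z / (1 + Real.exp z)^2) + 1/4) z := by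
        exact ((hasDerivAt_dd z).add ((hasDerivAt_id' z).div_const 4)).congr_deriv (by ring)
      rw [hD.deriv]
      have he := Real.exp_pos z
      have : 4 * Real.exp z ≤ (1 + Real.exp z)^2 := by nlinarith [sq_nonneg (1 - Real.exp z)]
      have h2 : Real.exp z / (1 + Real.exp z)^2 ≤ 1/4 := by
        rw [div_le_iff₀ (by positivity)]; nlinarith
      linarith
  have := hmono h
  simp only at this
  linarith

/-- subgradient inequality for the logistic loss -/
lemma ll_convex (a b : ℝ) : ll a - dd a * (b - a) ≤ ll b := by
  have hF : ∀ t : ℝ, HasDerivAt (fun t => ll t + dd a * t) (-dd t + dd a) t := by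
    intro t
    exact ((hasDerivAt_ll t).add ((hasDerivAt_id t).const_mul (dd a))).congr_deriv (by simp)
  rcases le_total a b with hab | hab
  · have hmono : MonotoneOn (fun t => ll t + dd a * t) (Set.Ici a) := by
      apply monotoneOn_of_deriv_nonneg (convex_Ici a)
      · exact fun t _ => (hF t).differentiableAt.continuousAt.continuousWithinAt
      · intro t ht
        exact ((hF t).differentiableAt).differentiableWithinAt
      · intro t ht
        rw [(hF t).deriv]
        have : dd t ≤ dd a := dd_antitone (le_of_lt (by simpa using ht))
        linarith
    have := hmono (Set.self_mem_Ici) (Set.mem_Ici.2 hab) hab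
    simp only at this
    nlinarith
  · have hanti : AntitoneOn (fun t => ll t + dd a * t) (Set.Iic a) := by
      apply antitoneOn_of_deriv_nonpos (convex_Iic a)
      · exact fun t _ => (hF t).differentiableAt.continuousAt.continuousWithinAt
      · intro t ht
        exact ((hF t).differentiableAt).differentiableWithinAt
      · intro t ht
        rw [(hF t).deriv]
        have : dd a ≤ dd t := dd_antitone (le_of_lt (by simpa using ht))
        linarith
    have := hanti (Set.mem_Iic.2 hab) (Set.self_mem_Iic) hab
    simp only at this
    nlinarith



/-- descent lemma for the scalar logistic loss -/
lemma ll_descent (a δ : ℝ) : ll (a + δ) ≤ ll a - dd a * δ + δ^2 / 8 := by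
  have hG : ∀ t : ℝ, HasDerivAt (fun t => ll (a + t*δ) + dd a * (t*δ) - t^2*δ^2/8)
      (-dd (a + t*δ) * δ + dd a * δ - t*δ^2/4) t := by
    intro t
    have h1 : HasDerivAt (fun t : ℝ => a + t*δ) δ t := by
      simpa using ((hasDerivAt_id' t).mul_const δ).const_add a
    have h2 := (hasDerivAt_ll (a + t*δ)).comp t h1
    have h3 : HasDerivAt (fun t : ℝ => dd a * (t*δ)) (dd a * δ) t := by
      simpa using ((hasDerivAt_id' t).mul_const δ).const_mul (dd a)
    have h4 : HasDerivAt (fun t : ℝ => t^2*δ^2/8) (t*δ^2/4) t := by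
      have := ((hasDerivAt_pow 2 t).mul_const (δ^2)).div_const 8
      refine this.congr_deriv ?_
      try ring
    have := (h2.add h3).sub h4
    refine this.congr_deriv rfl
    try ring
  have hanti : AntitoneOn (fun t => ll (a + t*δ) + dd a * (t*δ) - t^2*δ^2/8) (Set.Icc 0 1) := by
    apply antitoneOn_of_deriv_nonpos (convex_Icc 0 1)
    · exact fun t _ => (hG t).differentiableAt.continuousAt.continuousWithinAt
    · exact fun t _ => (hG t).differentiableAt.differentiableWithinAt
    · intro t ht
      rw [(hG t).deriv]
      rw [interior_Icc] at ht
      obtain ⟨ht0, ht1⟩ := ht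
      have key : δ * (dd a - dd (a + t*δ)) ≤ t*δ^2/4 := by
        rcases le_total 0 δ with hδ | hδ
        · have hle : a ≤ a + t*δ := by nlinarith
          have := dd_lip hle
          have h0 : dd a - dd (a + t*δ) ≤ t*δ/4 := by linarith [this]; 
          nlinarith
        · have hle : a + t*δ ≤ a := by nlinarith
          have := dd_lip hle
          -- dd (a+tδ) - dd a ≤ -tδ/4
          have h0 : dd (a + t*δ) - dd a ≤ -(t*δ)/4 := by
            have : a - (a + t*δ) = -(t*δ) := by ring
            linarith [this ▸ dd_lip hle]
          nlinarith
      nlinarith [key]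
  have h01 := hanti (Set.mem_Icc.2 ⟨le_refl 0, zero_le_one⟩) (Set.mem_Icc.2 ⟨zero_le_one, le_refl 1⟩) zero_le_one
  simp only at h01
  norm_num at h01
  linarith

/-- `log (1+y) ≤ y - y²/2 + y³/3` for `y ≥ 0`. -/
lemma log_le_P3 {y : ℝ} (hy : 0 ≤ y) :
    Real.log (1 + y) ≤ y - y^2/2 + y^3/3 := by
  have hH : ∀ t : ℝ, 0 ≤ t → HasDerivAt (fun t => t - t^2/2 + t^3/3 - Real.log (1 + t))
      (1 - t + t^2 - 1/(1+t)) t := by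
    intro t ht
    have h1 : HasDerivAt (fun t : ℝ => 1 + t) 1 t := by simpa using (hasDerivAt_id' t).const_add 1
    have h2 := h1.log (by positivity : (1:ℝ) + t ≠ 0)
    have h3 : HasDerivAt (fun t : ℝ => t - t^2/2 + t^3/3) (1 - t + t^2) t := by
      have := ((hasDerivAt_id' t).sub ((hasDerivAt_pow 2 t).div_const 2)).add ((hasDerivAt_pow 3 t).div_const 3)
      refine this.congr_deriv ?_
      try (push_cast; ring)
    have := h3.sub h2
    refine this.congr_deriv rfl
    try (rw [one_div]; ring)
  have hmono : MonotoneOn (fun t => t - t^2/2 + t^3/3 - Real.log (1 + t)) (Set.Ici 0) := by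
    apply monotoneOn_of_deriv_nonneg (convex_Ici 0)
    · exact fun t ht => (hH t (by simpa using ht)).differentiableAt.continuousAt.continuousWithinAt
    · intro t ht
      rw [interior_Ici] at ht
      exact (hH t (le_of_lt (by simpa using ht))).differentiableAt.differentiableWithinAt
    · intro t ht
      rw [interior_Ici] at ht
      have ht' : (0:ℝ) < t := by simpa using ht
      rw [(hH t ht'.le).deriv]
      have h1t : (0:ℝ) < 1 + t := by linarith
      have : 1 - t + t^2 - 1/(1+t) = t^3/(1+t) := by field_simp; ring
      rw [this]
      positivity
  have := hmono (Set.self_mem_Ici) (Set.mem_Ici.2 hy) hy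
  simp only at this
  norm_num at this
  linarith

/-- `log (1+y) ≤ y - y²/2 + y³/3 - y⁴/4 + y⁵/5 - y⁶/6 + y⁷/7` for `y ≥ 0`. -/
lemma log_le_P7 {y : ℝ} (hy : 0 ≤ y) :
    Real.log (1 + y) ≤ y - y^2/2 + y^3/3 - y^4/4 + y^5/5 - y^6/6 + y^7/7 := by
  have hH : ∀ t : ℝ, 0 ≤ t → HasDerivAt
      (fun t => t - t^2/2 + t^3/3 - t^4/4 + t^5/5 - t^6/6 + t^7/7 - Real.log (1 + t))
      (1 - t + t^2 - t^3 + t^4 - t^5 + t^6 - 1/(1+t)) t := by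
    intro t ht
    have h1 : HasDerivAt (fun t : ℝ => 1 + t) 1 t := by simpa using (hasDerivAt_id' t).const_add 1
    have h2 := h1.log (by positivity : (1:ℝ) + t ≠ 0)
    have h3 : HasDerivAt (fun t : ℝ => t - t^2/2 + t^3/3 - t^4/4 + t^5/5 - t^6/6 + t^7/7)
        (1 - t + t^2 - t^3 + t^4 - t^5 + t^6) t := by
      have := (((((( (hasDerivAt_id' t).sub ((hasDerivAt_pow 2 t).div_const 2)).add
        ((hasDerivAt_pow 3 t).div_const 3)).sub ((hasDerivAt_pow 4 t).div_const 4)).add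
        ((hasDerivAt_pow 5 t).div_const 5)).sub ((hasDerivAt_pow 6 t).div_const 6)).add
        ((hasDerivAt_pow 7 t).div_const 7))
      refine this.congr_deriv ?_
      try (push_cast; ring)
    have := h3.sub h2
    refine this.congr_deriv rfl
    try (rw [one_div]; ring)
  have hmono : MonotoneOn
      (fun t => t - t^2/2 + t^3/3 - t^4/4 + t^5/5 - t^6/6 + t^7/7 - Real.log (1 + t))
      (Set.Ici 0) := by
    apply monotoneOn_of_deriv_nonneg (convex_Ici 0)
    · exact fun t ht => (hH t (by simpa using ht)).differentiableAt.continuousAt.continuousWithinAt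
    · intro t ht
      rw [interior_Ici] at ht
      exact (hH t (le_of_lt (by simpa using ht))).differentiableAt.differentiableWithinAt
    · intro t ht
      rw [interior_Ici] at ht
      have ht' : (0:ℝ) < t := by simpa using ht
      rw [(hH t ht'.le).deriv]
      have h1t : (0:ℝ) < 1 + t := by linarith
      have : 1 - t + t^2 - t^3 + t^4 - t^5 + t^6 - 1/(1+t) = t^7/(1+t) := by field_simp; ring
      rw [this]
      positivity
  have := hmono (Set.self_mem_Ici) (Set.mem_Ici.2 hy) hy
  simp only at this
  norm_num at this
  linarith



lemma exp_le_quad {x : ℝ} (h0 : 0 ≤ x) (h1 : x ≤ 1) : Real.exp x ≤ 1 + x + x^2 := by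
  have h := Real.exp_bound' h0 h1 (n := 3) (by norm_num)
  have hs : ∑ m ∈ Finset.range 3, x ^ m / (m.factorial : ℝ) = 1 + x + x^2/2 := by
    rw [Finset.sum_range_succ, Finset.sum_range_succ, Finset.sum_range_succ]
    norm_num [Nat.factorial]
  rw [hs] at h
  norm_num [Nat.factorial] at h
  nlinarith [pow_nonneg h0 2, pow_nonneg h0 3]

lemma exp_neg_le {r y : ℝ} (h0 : 0 ≤ r)
    (h : 1 ≤ y * (1+r+r^2/2+r^3/6+r^4/24+r^5/120+r^6/720)) : Real.exp (-r) ≤ y := by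
  have hT : (0:ℝ) < 1+r+r^2/2+r^3/6+r^4/24+r^5/120+r^6/720 := by positivity
  have hTe : 1+r+r^2/2+r^3/6+r^4/24+r^5/120+r^6/720 ≤ Real.exp r := by
    have := Real.sum_le_exp_of_nonneg h0 7
    have hs : ∑ i ∈ Finset.range 7, r ^ i / (i.factorial : ℝ)
        = 1+r+r^2/2+r^3/6+r^4/24+r^5/120+r^6/720 := by
      rw [Finset.sum_range_succ, Finset.sum_range_succ, Finset.sum_range_succ,
        Finset.sum_range_succ, Finset.sum_range_succ, Finset.sum_range_succ,
        Finset.sum_range_succ]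
      norm_num [Nat.factorial]
    rwa [hs] at this
  rw [Real.exp_neg]
  have h1 : (Real.exp r)⁻¹ ≤ (1+r+r^2/2+r^3/6+r^4/24+r^5/120+r^6/720)⁻¹ :=
    inv_anti₀ hT hTe
  have h2 : (1+r+r^2/2+r^3/6+r^4/24+r^5/120+r^6/720)⁻¹ ≤ y := by
    rw [inv_eq_one_div, div_le_iff₀ hT]; linarith
  linarith

lemma log_lower {n a b : ℕ} (hn : 1 ≤ n) (hb : 0 < b)
    (h : (2.7182818286:ℝ)^a ≤ (n:ℝ)^b) : (a:ℝ)/(b:ℝ) ≤ Real.log n := by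
  have hE : Real.exp (a:ℝ) ≤ (2.7182818286:ℝ)^a := by
    have : Real.exp (a:ℝ) = Real.exp 1 ^ a := by
      rw [← Real.exp_nat_mul]; norm_num
    rw [this]
    exact pow_le_pow_left₀ (Real.exp_pos 1).le Real.exp_one_lt_d9.le a
  have h2 : Real.exp (a:ℝ) ≤ (n:ℝ)^b := le_trans hE h
  have h3 : (a:ℝ) ≤ (b:ℝ) * Real.log n := by
    have := Real.log_le_log (Real.exp_pos _) h2
    rwa [Real.log_exp, Real.log_pow] at this
  rw [div_le_iff₀ (by exact_mod_cast hb)]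
  linarith

lemma case_helper {R q r y : ℝ} (hR : 2 ≤ R) (hq : 0 ≤ q) (hql : q ≤ Real.log R) (hr : 0 ≤ r)
    (hy : Real.exp (-r) ≤ y)
    (hA : r^2 * R ≤ q^2 * (R-1))
    (hB : (y - y^2/2 + y^3/3 - y^4/4 + y^5/5 - y^6/6 + y^7/7) + r^2/(2*(R-1)) ≤ 1/R + q^2/(2*R)) :
    r^2 * R ≤ (Real.log R)^2*(R-1) ∧
      Real.log (1+Real.exp (-r)) + r^2/(2*(R-1)) ≤ 1/R + (Real.log R)^2/(2*R) := by
  have hl : q^2 ≤ (Real.log R)^2 := by nlinarith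
  constructor
  · nlinarith
  · have hy0 : 0 ≤ y := le_trans (Real.exp_pos _).le hy
    have h1 : Real.log (1+Real.exp (-r)) ≤ Real.log (1+y) :=
      Real.log_le_log (by positivity) (by linarith)
    have h2 := log_le_P7 hy0
    have h3 : q^2/(2*R) ≤ (Real.log R)^2/(2*R) := by gcongr <;> linarith
    linarith


set_option maxHeartbeats 2000000 in
/-- the general branch, for every real `R ≥ 8`. -/
lemma general_branch {R : ℝ} (hR : 8 ≤ R) :
    ∃ r : ℝ, 0 ≤ r ∧ r^2 * R ≤ (Real.log R)^2*(R-1) ∧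
      Real.log (1+Real.exp (-r)) + r^2/(2*(R-1)) ≤ 1/R + (Real.log R)^2/(2*R) := by
  have hRpos : (0:ℝ) < R := by linarith
  set l := Real.log R with hl
  have hl8 : Real.log 8 ≤ l := Real.log_le_log (by norm_num) hR
  have hl2 : (2.0794:ℝ) ≤ l := by
    have h8 : Real.log 8 = 3 * Real.log 2 := by
      rw [show (8:ℝ) = 2^3 by norm_num, Real.log_pow]; norm_num
    have := Real.log_two_gt_d9
    rw [h8] at hl8
    linarith
  have hl0 : 0 ≤ l := by linarith
  -- l ≤ R / e hence l/R ≤ 0.368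
  have hxe : l ≤ R * 0.368 := by
    have h1 : Real.log (R / Real.exp 1) ≤ R / Real.exp 1 - 1 :=
      Real.log_le_sub_one_of_pos (by positivity)
    rw [Real.log_div (ne_of_gt hRpos) (Real.exp_ne_zero 1), Real.log_exp] at h1
    have he : (2.7182818283:ℝ) < Real.exp 1 := Real.exp_one_gt_d9
    have h2 : R / Real.exp 1 ≤ R / 2.7182818283 :=
      div_le_div_of_nonneg_left (by linarith) (by norm_num) he.le
    have h3 : R / 2.7182818283 ≤ R * 0.368 := by
      rw [div_le_iff₀ (by norm_num)]
      nlinarith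
    linarith
  have hx1 : l / R ≤ 0.368 := by rw [div_le_iff₀ hRpos]; nlinarith
  have hx0 : 0 ≤ l / R := by positivity
  refine ⟨l * (R-1) / R, div_nonneg (mul_nonneg hl0 (by linarith)) hRpos.le, ?_, ?_⟩
  · have : l * (R-1) / R ≤ l := by
      rw [div_le_iff₀ hRpos]
      nlinarith
    have h2 : (l * (R-1) / R)^2 = l^2 * (R-1)^2 / R^2 := by ring
    rw [h2, div_mul_eq_mul_div, div_le_iff₀ (by positivity)]
    nlinarith [sq_nonneg l]
  · set r := l * (R-1) / R with hr
    have hexp : Real.exp (-r) = Real.exp (l/R) / R := by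
      have h5 : -r = l/R - l := by
        rw [hr]
        field_simp [hRpos.ne']
        ring
      rw [h5, Real.exp_sub, Real.exp_log hRpos]
    set x := l / R with hxd
    have hq : Real.exp x ≤ 1 + x + x^2 := exp_le_quad hx0 (by linarith)
    have hXpos : (0:ℝ) < 1 + x + x^2 := by positivity
    have hstep1 : Real.log (1 + Real.exp (-r)) ≤ Real.log (1 + (1+x+x^2)/R) := by
      apply Real.log_le_log (by positivity)
      rw [hexp]
      have : Real.exp x / R ≤ (1+x+x^2)/R := by gcongr
      linarith
    have hstep2 : Real.log (1 + (1+x+x^2)/R) ≤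
        (1+x+x^2)/R - ((1+x+x^2)/R)^2/2 + ((1+x+x^2)/R)^3/3 :=
      log_le_P3 (by positivity)
    -- bound the middle and last terms
    have hX2 : (1+2*x) / R^2 ≤ ((1+x+x^2)/R)^2 := by
      rw [div_pow]
      gcongr
      nlinarith [sq_nonneg x]
    have hXub : 1 + x + x^2 ≤ 1.5035 := by nlinarith
    have hX3 : ((1+x+x^2)/R)^3 ≤ 3.5 / R^3 := by
      rw [div_pow]
      gcongr
      nlinarith [sq_nonneg (1+x+x^2)]
    have hstep3 : Real.log (1 + Real.exp (-r)) ≤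
        (1+x+x^2)/R - ((1+2*x)/R^2)/2 + (3.5/R^3)/3 := by
      linarith [hstep1, hstep2, hX2, hX3]
    -- final polynomial inequality
    have hkey : 6*l^2 - 6*l + 7 ≤ 3*R*(l-1)^2 := by
      nlinarith [sq_nonneg (l - 2.0794), sq_nonneg (l-1)]
    have hr2 : r^2/(2*(R-1)) = l^2*(R-1)/(2*R^2) := by
      rw [hr]
      rw [div_pow, div_div, div_eq_div_iff (by nlinarith) (by positivity)]
      ring
    rw [hr2]
    have hfinal : (1+x+x^2)/R - ((1+2*x)/R^2)/2 + (3.5/R^3)/3 + l^2*(R-1)/(2*R^2)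
        ≤ 1/R + l^2/(2*R) := by
      rw [hxd, ← sub_nonneg]
      have hexpand : 1/R + l^2/(2*R) - ((1+l/R+(l/R)^2)/R - ((1+2*(l/R))/R^2)/2 + (3.5/R^3)/3
          + l^2*(R-1)/(2*R^2)) = (3*R*(l-1)^2 - (6*l^2 - 6*l + 7)) / (6*R^3) := by
        field_simp [hRpos.ne']
        ring
      rw [hexpand]
      apply div_nonneg (by linarith [hkey]) (by positivity)
    linarith


lemma log3_lb : (23:ℝ)/21 ≤ Real.log 3 := by
  have := log_lower (n:=3) (a:=23) (b:=21) (by norm_num) (by norm_num) (by norm_num)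
  push_cast at this
  convert this using 2

lemma log5_lb : (45:ℝ)/28 ≤ Real.log 5 := by
  have := log_lower (n:=5) (a:=45) (b:=28) (by norm_num) (by norm_num) (by norm_num)
  push_cast at this
  convert this using 2

lemma log7_lb : (68:ℝ)/35 ≤ Real.log 7 := by
  have := log_lower (n:=7) (a:=68) (b:=35) (by norm_num) (by norm_num) (by norm_num)
  push_cast at this
  convert this using 2

lemma endgame (T : ℕ) (hT : 2 ≤ T) :
    ∃ r : ℝ, 0 ≤ r ∧ r^2 * T ≤ (Real.log T)^2*((T:ℝ)-1) ∧
      Real.log (1+Real.exp (-r)) + r^2/(2*((T:ℝ)-1)) ≤ 1/T + (Real.log T)^2/(2*T) := by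
  rcases le_or_gt 8 T with h8 | h8
  · exact general_branch (by exact_mod_cast h8)
  · interval_cases T
    · -- T = 2
      have h := case_helper (R := 2) (q := 0.6931471803) (r := 2/5) (y := 0.6703202)
        (by norm_num) (by norm_num) Real.log_two_gt_d9.le (by norm_num)
        (exp_neg_le (by norm_num) (by norm_num)) (by norm_num) (by norm_num)
      exact ⟨2/5, by norm_num, by push_cast; exact h.1, by push_cast; exact h.2⟩
    · -- T = 3
      have h := case_helper (R := 3) (q := 23/21) (r := 17/25) (y := 0.50662074)
        (by norm_num) (by norm_num) log3_lb (by norm_num)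
        (exp_neg_le (by norm_num) (by norm_num)) (by norm_num) (by norm_num)
      exact ⟨17/25, by norm_num, by push_cast; exact h.1, by push_cast; exact h.2⟩
    · -- T = 4
      have hql : (1.3862943606:ℝ) ≤ Real.log 4 := by
        rw [show (4:ℝ) = 2^2 by norm_num, Real.log_pow]
        push_cast
        linarith [Real.log_two_gt_d9]
      have h := case_helper (R := 4) (q := 1.3862943606) (r := 22/25) (y := 0.41479857)
        (by norm_num) (by norm_num) hql (by norm_num)
        (exp_neg_le (by norm_num) (by norm_num)) (by norm_num) (by norm_num)
      exact ⟨22/25, by norm_num, by push_cast; exact h.1, by push_cast; exact h.2⟩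
    · -- T = 5
      have h := case_helper (R := 5) (q := 45/28) (r := 26/25) (y := 0.3534921)
        (by norm_num) (by norm_num) log5_lb (by norm_num)
        (exp_neg_le (by norm_num) (by norm_num)) (by norm_num) (by norm_num)
      exact ⟨26/25, by norm_num, by push_cast; exact h.1, by push_cast; exact h.2⟩
    · -- T = 6
      have hql : (0.6931471803:ℝ) + 23/21 ≤ Real.log 6 := by
        rw [show (6:ℝ) = 2*3 by norm_num, Real.log_mul (by norm_num) (by norm_num)]
        have h2 := Real.log_two_gt_d9
        have h3 := log3_lb
        linarith
      have h := case_helper (R := 6) (q := 0.6931471803 + 23/21) (r := 59/50) (y := 0.30734855)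
        (by norm_num) (by norm_num) hql (by norm_num)
        (exp_neg_le (by norm_num) (by norm_num)) (by norm_num) (by norm_num)
      exact ⟨59/50, by norm_num, by push_cast; exact h.1, by push_cast; exact h.2⟩
    · -- T = 7
      have h := case_helper (R := 7) (q := 68/35) (r := 13/10) (y := 0.27264183)
        (by norm_num) (by norm_num) log7_lb (by norm_num)
        (exp_neg_le (by norm_num) (by norm_num)) (by norm_num) (by norm_num)
      exact ⟨13/10, by norm_num, by push_cast; exact h.1, by push_cast; exact h.2⟩




variable {d m : ℕ}

noncomputable def G (x : Fin m → EuclideanSpace ℝ (Fin d)) (v : EuclideanSpace ℝ (Fin d)) :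
    EuclideanSpace ℝ (Fin d) :=
  (1/(m:ℝ)) • ∑ i, (- dd ⟪x i, v⟫) • x i

lemma inner_G (x : Fin m → EuclideanSpace ℝ (Fin d)) (v y : EuclideanSpace ℝ (Fin d)) :
    ⟪G x v, y⟫ = (1/(m:ℝ)) * ∑ i, (- dd ⟪x i, v⟫) * ⟪x i, y⟫ := by
  rw [G, real_inner_smul_left, sum_inner]
  congr 1
  exact Finset.sum_congr rfl fun i _ => real_inner_smul_left _ _ _

lemma hasGradientAt_L (x : Fin m → EuclideanSpace ℝ (Fin d)) (v : EuclideanSpace ℝ (Fin d)) :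
    HasGradientAt (fun v => (1/(m:ℝ)) * ∑ i, ll ⟪x i, v⟫) (G x v) v := by
  have hFD : ∀ i : Fin m, HasFDerivAt (fun v : EuclideanSpace ℝ (Fin d) => ll ⟪x i, v⟫)
      ((- dd ⟪x i, v⟫) • (innerSL ℝ (x i))) v := fun i =>
    (hasDerivAt_ll _).comp_hasFDerivAt v ((innerSL ℝ (x i)).hasFDerivAt)
  have hsum := HasFDerivAt.sum (fun i (_ : i ∈ Finset.univ) => hFD i)
  have hmul := hsum.const_mul (1/(m:ℝ))
  rw [hasGradientAt_iff_hasFDerivAt]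
  have hfun : (fun v => (1/(m:ℝ)) * ∑ i, ll ⟪x i, v⟫) =
      fun y => 1/(m:ℝ) * (∑ i, fun v => ll ⟪x i, v⟫) y := by
    funext y; rw [Finset.sum_apply]
  rw [hfun]
  refine hmul.congr_fderiv ?_
  apply ContinuousLinearMap.ext
  intro y
  simp only [InnerProductSpace.toDual_apply_apply, ContinuousLinearMap.smul_apply,
    ContinuousLinearMap.coe_sum', Finset.sum_apply, innerSL_apply_apply, smul_eq_mul]
  rw [inner_G]

lemma L_convex (hm : 0 < m) (x : Fin m → EuclideanSpace ℝ (Fin d))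
    (v u : EuclideanSpace ℝ (Fin d)) :
    (1/(m:ℝ)) * ∑ i, ll ⟪x i, v⟫ + ⟪G x v, u - v⟫ ≤ (1/(m:ℝ)) * ∑ i, ll ⟪x i, u⟫ := by
  rw [inner_G, ← mul_add]
  apply mul_le_mul_of_nonneg_left _ (by positivity)
  rw [← Finset.sum_add_distrib]
  apply Finset.sum_le_sum
  intro i _
  have h := ll_convex ⟪x i, v⟫ ⟪x i, u⟫
  have h2 : ⟪x i, u - v⟫ = ⟪x i, u⟫ - ⟪x i, v⟫ := inner_sub_right _ _ _
  rw [h2]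
  nlinarith [h]

lemma L_descent (hm : 0 < m) (x : Fin m → EuclideanSpace ℝ (Fin d)) (hx : ∀ i, ‖x i‖ ≤ 1)
    (v h : EuclideanSpace ℝ (Fin d)) :
    (1/(m:ℝ)) * ∑ i, ll ⟪x i, v + h⟫ ≤
      (1/(m:ℝ)) * ∑ i, ll ⟪x i, v⟫ + ⟪G x v, h⟫ + ‖h‖^2/8 := by
  have hm' : (0:ℝ) < m := by exact_mod_cast hm
  rw [inner_G]
  have key : ∑ i, ll ⟪x i, v + h⟫ ≤
      ∑ i, (ll ⟪x i, v⟫ + (- dd ⟪x i, v⟫) * ⟪x i, h⟫ + ‖h‖^2/8) := by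
    apply Finset.sum_le_sum
    intro i _
    have h1 : ⟪x i, v + h⟫ = ⟪x i, v⟫ + ⟪x i, h⟫ := inner_add_right _ _ _
    have h2 := ll_descent ⟪x i, v⟫ ⟪x i, h⟫
    have h3 : ⟪x i, h⟫^2 ≤ ‖h‖^2 := by
      have h4 := abs_real_inner_le_norm (x i) h
      have h5 : ‖x i‖ * ‖h‖ ≤ 1 * ‖h‖ :=
        mul_le_mul_of_nonneg_right (hx i) (norm_nonneg h)
      have h6 : |⟪x i, h⟫| ≤ ‖h‖ := by rw [one_mul] at h5; linarith
      nlinarith [abs_nonneg ⟪x i, h⟫, sq_abs ⟪x i, h⟫]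
    rw [h1]
    nlinarith [h2]
  have expand : ∑ i, (ll ⟪x i, v⟫ + (- dd ⟪x i, v⟫) * ⟪x i, h⟫ + ‖h‖^2/8)
      = ∑ i, ll ⟪x i, v⟫ + ∑ i, (- dd ⟪x i, v⟫) * ⟪x i, h⟫ + (m:ℝ) * (‖h‖^2/8) := by
    rw [Finset.sum_add_distrib, Finset.sum_add_distrib, Finset.sum_const]
    simp [Finset.card_univ]
  calc (1/(m:ℝ)) * ∑ i, ll ⟪x i, v + h⟫
      ≤ (1/(m:ℝ)) * (∑ i, ll ⟪x i, v⟫ + ∑ i, (- dd ⟪x i, v⟫) * ⟪x i, h⟫ + (m:ℝ) * (‖h‖^2/8)) := by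
        rw [← expand]
        exact mul_le_mul_of_nonneg_left key (by positivity)
    _ = (1/(m:ℝ)) * ∑ i, ll ⟪x i, v⟫ + (1/(m:ℝ)) * ∑ i, (- dd ⟪x i, v⟫) * ⟪x i, h⟫ + ‖h‖^2/8 := by
        field_simp



lemma step_arith {s A B C D1 Dt Dt1 : ℝ} (hs : 1 ≤ s)
    (ih : (s-1)*B ≤ (s-1)*C + (D1 - Dt)/2)
    (hmono : A ≤ B)
    (hkey : A ≤ C + (Dt - Dt1)/2) :
    s*A ≤ s*C + (D1 - Dt1)/2 := by
  nlinarith [mul_le_mul_of_nonneg_left hmono (by linarith : (0:ℝ) ≤ s - 1)]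

lemma ll_antitone {a b : ℝ} (h : a ≤ b) : ll b ≤ ll a := by
  unfold ll
  apply Real.log_le_log (by positivity)
  have : Real.exp (-b) ≤ Real.exp (-a) := Real.exp_le_exp.2 (by linarith)
  linarith


end Stmt8

open Stmt8 in
/-- Lemma 5 of the paper, from Ji–Telgarsky. For the logistic
loss `ℓ(z) = log(1 + exp(−z))`, gradient descent with step size `1` on the
empirical risk of a dataset separable with margin `γ` satisfies
`L̂(w_T) ≤ 1/T + log²(T)/(2γ²T)` for every `T ≥ 1`. -/
theorem stmt_8 {d m : ℕ} (hm : 0 < m)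
    (x : Fin m → EuclideanSpace ℝ (Fin d)) (hx : ∀ i, ‖x i‖ ≤ 1)
    (γ : ℝ) (hγ : γ ∈ Set.Ioc (0 : ℝ) 1)
    (w₀ : EuclideanSpace ℝ (Fin d)) (hw₀ : ‖w₀‖ = 1)
    (hsep : ∀ i, γ ≤ ⟪x i, w₀⟫)
    (L : EuclideanSpace ℝ (Fin d) → ℝ)
    (hL : ∀ v, L v = (1 / m) * ∑ i, Real.log (1 + Real.exp (-⟪x i, v⟫)))
    (w : ℕ → EuclideanSpace ℝ (Fin d)) (hw1 : w 1 = 0)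
    (hrec : ∀ t, 1 ≤ t → w (t + 1) = w t - gradient L (w t)) :
    ∀ T : ℕ, 1 ≤ T →
      L (w T) ≤ 1 / T + (Real.log T) ^ 2 / (2 * γ ^ 2 * T) := by
  obtain ⟨hγ0, hγ1⟩ := hγ
  have hm' : (0:ℝ) < m := by exact_mod_cast hm
  have hLfun : L = fun v => (1/(m:ℝ)) * ∑ i, ll ⟪x i, v⟫ := funext fun v => hL v
  have hLval : ∀ v, L v = (1/(m:ℝ)) * ∑ i, ll ⟪x i, v⟫ := fun v => hL v
  have hgrad : ∀ v, gradient L v = G x v := by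
    intro v
    rw [hLfun]
    exact (hasGradientAt_L x v).gradient
  -- value at 0
  have hL0 : L 0 = Real.log 2 := by
    rw [hL]
    have : ∀ i : Fin m, Real.log (1 + Real.exp (-⟪x i, (0:EuclideanSpace ℝ (Fin d))⟫))
        = Real.log 2 := by
      intro i
      rw [inner_zero_right]
      norm_num
    rw [Finset.sum_congr rfl fun i _ => this i]
    rw [Finset.sum_const]
    simp [Finset.card_univ]
    field_simp
  intro T hT
  rcases eq_or_lt_of_le hT with hT1 | hT2
  · -- T = 1
    rw [← hT1, hw1, hL0]
    have := Real.log_two_lt_d9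
    norm_num
    linarith
  · -- T ≥ 2
    have hT2' : 2 ≤ T := hT2
    have hTR : (2:ℝ) ≤ T := by exact_mod_cast hT2'
    obtain ⟨r, hr0, hA, hB⟩ := endgame T hT2'
    set u := (r/γ) • w₀ with hudef
    have hnormu : ‖u‖^2 = r^2/γ^2 := by
      rw [hudef, norm_smul, hw₀, mul_one, Real.norm_eq_abs, sq_abs, div_pow]
    have hLu : L u ≤ ll r := by
      rw [hLval]
      have hper : ∀ i : Fin m, ll ⟪x i, u⟫ ≤ ll r := by
        intro i
        apply ll_antitone
        rw [hudef, real_inner_smul_right]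
        have h1 : r/γ * γ ≤ r/γ * ⟪x i, w₀⟫ :=
          mul_le_mul_of_nonneg_left (hsep i) (div_nonneg hr0 hγ0.le)
        rw [div_mul_cancel₀ r (ne_of_gt hγ0)] at h1
        exact h1
      calc (1/(m:ℝ)) * ∑ i, ll ⟪x i, u⟫ ≤ (1/(m:ℝ)) * ∑ i, (fun _ : Fin m => ll r) i := by
            apply mul_le_mul_of_nonneg_left (Finset.sum_le_sum fun i _ => hper i) (by positivity)
        _ = ll r := by
            rw [Finset.sum_const]
            simp [Finset.card_univ]
            field_simp
    -- telescoping
    have htel : ∀ t : ℕ, 1 ≤ t → ((t:ℝ)-1) * L (w t) ≤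
        ((t:ℝ)-1) * L u + (‖w 1 - u‖^2 - ‖w t - u‖^2)/2 := by
      intro t ht
      induction t, ht using Nat.le_induction with
      | base => norm_num
      | succ t ht ih =>
        set g := G x (w t) with hgdef
        have hwrec : w (t+1) = w t - g := by rw [hrec t ht, hgrad]
        have hdesc : L (w (t+1)) ≤ L (w t) - (7/8)*‖g‖^2 := by
          have hd := L_descent hm x hx (w t) (-g)
          rw [← hLval (w t + -g), ← hLval (w t)] at hd
          have h1 : w t + -g = w (t+1) := by rw [hwrec]; abel
          rw [h1] at hd
          have h2 : ⟪g, -g⟫ = -‖g‖^2 := by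
            rw [inner_neg_right, real_inner_self_eq_norm_sq]
          rw [h2] at hd
          have h3 : ‖-g‖^2 = ‖g‖^2 := by rw [norm_neg]
          rw [h3] at hd
          linarith
        have hconv : L (w t) ≤ L u + ⟪g, w t - u⟫ := by
          have hc := L_convex hm x (w t) u
          rw [← hLval (w t), ← hLval u] at hc
          have h1 : ⟪g, u - w t⟫ = -⟪g, w t - u⟫ := by
            rw [show u - w t = -(w t - u) by abel, inner_neg_right]
          rw [h1] at hc
          linarith
        have hD : ‖w (t+1) - u‖^2 = ‖w t - u‖^2 - 2*⟪w t - u, g⟫ + ‖g‖^2 := by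
          rw [show w (t+1) - u = (w t - u) - g by rw [hwrec]; abel]
          exact norm_sub_sq_real _ _
        have hsymm : ⟪w t - u, g⟫ = ⟪g, w t - u⟫ := real_inner_comm _ _
        have hkey : L (w (t+1)) ≤ L u + (‖w t - u‖^2 - ‖w (t+1) - u‖^2)/2 := by
          linarith [sq_nonneg ‖g‖, hdesc, hconv, hD, hsymm]
        have hmono : L (w (t+1)) ≤ L (w t) := by linarith [sq_nonneg ‖g‖, hdesc]
        have hts : (1:ℝ) ≤ (t:ℝ) := by exact_mod_cast ht
        have hfinal := step_arith hts ih hmono hkey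
        push_cast
        linarith [hfinal]
    -- conclude
    have hTm1 : (0:ℝ) < (T:ℝ) - 1 := by linarith
    have hmain := htel T (by omega)
    rw [hw1] at hmain
    have hzs : ‖(0:EuclideanSpace ℝ (Fin d)) - u‖^2 = ‖u‖^2 := by
      rw [zero_sub, norm_neg]
    rw [hzs] at hmain
    have hLT : L (w T) ≤ L u + ‖u‖^2/(2*((T:ℝ)-1)) := by
      have h2 : ((T:ℝ)-1) * L (w T) ≤ ((T:ℝ)-1) * L u + ‖u‖^2/2 := by
        linarith [hmain, sq_nonneg ‖w T - u‖]
      calc L (w T) = (((T:ℝ)-1) * L (w T))/((T:ℝ)-1) := by field_simp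
        _ ≤ (((T:ℝ)-1) * L u + ‖u‖^2/2)/((T:ℝ)-1) := by gcongr
        _ = L u + ‖u‖^2/(2*((T:ℝ)-1)) := by field_simp
    -- final arithmetic
    have hdiv : r^2/(2*((T:ℝ)-1)) ≤ (Real.log (T:ℝ))^2/(2*(T:ℝ)) := by
      rw [div_le_div_iff₀ (by linarith) (by linarith)]
      linarith [hA]
    have hc1 : (1:ℝ) ≤ 1/γ^2 := by
      rw [le_div_iff₀ (by positivity : (0:ℝ) < γ^2)]
      nlinarith
    have hfin : ll r + (r^2/γ^2)/(2*((T:ℝ)-1)) ≤ 1/(T:ℝ) + (Real.log (T:ℝ))^2/(2*γ^2*(T:ℝ)) := by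
      have e1 : (r^2/γ^2)/(2*((T:ℝ)-1)) = r^2/(2*((T:ℝ)-1)) + (1/γ^2 - 1) * (r^2/(2*((T:ℝ)-1))) := by
        field_simp
        ring
      have e2 : (1/γ^2 - 1) * (r^2/(2*((T:ℝ)-1))) ≤ (1/γ^2 - 1) * ((Real.log (T:ℝ))^2/(2*(T:ℝ))) :=
        mul_le_mul_of_nonneg_left hdiv (by linarith)
      have e3 : 1/(T:ℝ) + (Real.log (T:ℝ))^2/(2*(T:ℝ)) + (1/γ^2 - 1) * ((Real.log (T:ℝ))^2/(2*(T:ℝ))) = 1/(T:ℝ) + (Real.log (T:ℝ))^2/(2*γ^2*(T:ℝ)) := by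
        field_simp
        ring
      have hBl : ll r + r^2/(2*((T:ℝ)-1)) ≤ 1/(T:ℝ) + (Real.log (T:ℝ))^2/(2*(T:ℝ)) := hB
      linarith
    rw [hnormu] at hLT
    linarith [hLT, hLu, hfin]
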